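/- Let G be an ordered group with Riesz interpolation, order unit u, and I an ideal of G. If τ₁, τ₂ are distinct extreme states on (G, u) and τ₂|_I is a scalar multiple of τ₁|_I, then τ₂|_I = 0. -/

import Mathlib

/-- The state space of an ordered abelian group `G` with order unit `u`. -/
def stateSet (G : Type*) [AddCommGroup G] [PartialOrder G] (u : G) :
    Set (G → ℝ) :=
  {f | (∀ a b : G, f (a + b) = f a + f b) ∧ (∀ a : G, 0 ≤ a → 0 ≤ f a) ∧ f u = 1}


namespace Stmt8

variable {G : Type*} [AddCommGroup G] [PartialOrder G]

section Basic
variable (hadd : ∀ g h x : G, g ≤ h → g + x ≤ h + x)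
include hadd

theorem le_iff' {a b : G} : a ≤ b ↔ 0 ≤ b - a := by
  constructor
  · intro h; simpa [sub_eq_add_neg] using hadd a b (-a) h
  · intro h; simpa using hadd 0 (b - a) a h

theorem add_nonneg' {a b : G} (ha : 0 ≤ a) (hb : 0 ≤ b) : 0 ≤ a + b :=
  le_trans hb (by simpa using hadd 0 a b ha)

theorem add_le_add'' {a b c d : G} (h1 : a ≤ b) (h2 : c ≤ d) : a + c ≤ b + d :=
  le_trans (hadd a b c h1) (by rw [add_comm b c, add_comm b d]; exact hadd c d b h2)

theorem nsmul_nonneg' {a : G} (ha : 0 ≤ a) : ∀ n : ℕ, 0 ≤ n • a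
  | 0 => by simp
  | (n+1) => by
      rw [succ_nsmul]
      exact add_nonneg' hadd (nsmul_nonneg' ha n) ha

end Basic

/-- Riesz decomposition from interpolation. -/
theorem riesz_decomp (hadd : ∀ g h x : G, g ≤ h → g + x ≤ h + x)
    (hRiesz : ∀ a₁ a₂ b₁ b₂ : G, a₁ ≤ b₁ → a₁ ≤ b₂ → a₂ ≤ b₁ → a₂ ≤ b₂ →
      ∃ z : G, a₁ ≤ z ∧ a₂ ≤ z ∧ z ≤ b₁ ∧ z ≤ b₂)
    {a b c : G} (ha : 0 ≤ a) (hb : 0 ≤ b) (hc : 0 ≤ c) (h : c ≤ a + b) :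
    ∃ a' b', 0 ≤ a' ∧ a' ≤ a ∧ 0 ≤ b' ∧ b' ≤ b ∧ c = a' + b' := by
  have h1 : c - b ≤ c := by
    rw [le_iff' hadd, show c - (c - b) = b by abel]; exact hb
  have h2 : c - b ≤ a := by
    rw [le_iff' hadd, show a - (c - b) = (a + b) - c by abel, ← le_iff' hadd]
    exact h
  obtain ⟨z, hz1, hz2, hz3, hz4⟩ := hRiesz (c - b) 0 c a h1 h2 hc ha
  refine ⟨z, c - z, hz2, hz4, ?_, ?_, by abel⟩
  · rw [← le_iff' hadd] at *; exact hz3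
  · rw [le_iff' hadd, show b - (c - z) = z - (c - b) by abel, ← le_iff' hadd]
    exact hz1

section State

variable {u : G} {τ : G → ℝ}

theorem state_add (hτ : τ ∈ stateSet G u) (a b : G) : τ (a + b) = τ a + τ b := hτ.1 a b

theorem state_zero (hτ : τ ∈ stateSet G u) : τ 0 = 0 := by
  have := hτ.1 0 0; simp at this; linarith

theorem state_sub (hτ : τ ∈ stateSet G u) (a b : G) : τ (a - b) = τ a - τ b := by
  have := hτ.1 (a - b) b; simp at this; linarith

theorem state_mono (hadd : ∀ g h x : G, g ≤ h → g + x ≤ h + x)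
    (hτ : τ ∈ stateSet G u) {a b : G} (h : a ≤ b) : τ a ≤ τ b := by
  have h0 : 0 ≤ b - a := (le_iff' hadd).mp h
  have := hτ.2.1 _ h0
  rw [state_sub hτ] at this; linarith

theorem state_nsmul (hτ : τ ∈ stateSet G u) (a : G) : ∀ n : ℕ, τ (n • a) = n * τ a
  | 0 => by simpa using state_zero hτ
  | (n+1) => by
      rw [succ_nsmul, state_add hτ, state_nsmul hτ a n]
      push_cast; ring

end State

/-- The set of values of `τ` on positive elements of `I` below `x`. -/
def Sset (I : AddSubgroup G) (τ : G → ℝ) (x : G) : Set ℝ :=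
  {r | ∃ a, a ∈ I ∧ 0 ≤ a ∧ a ≤ x ∧ τ a = r}

noncomputable def fI (I : AddSubgroup G) (τ : G → ℝ) (x : G) : ℝ :=
  sSup (Sset I τ x)

section fI

variable (hadd : ∀ g h x : G, g ≤ h → g + x ≤ h + x)
variable {u : G} {I : AddSubgroup G} {τ : G → ℝ} (hτ : τ ∈ stateSet G u)

theorem Sset_nonempty {x : G} (hx : 0 ≤ x) : (Sset I τ x).Nonempty :=
  ⟨τ 0, 0, I.zero_mem, le_refl 0, hx, rfl⟩

include hadd hτ in
theorem Sset_bdd {x : G} : BddAbove (Sset I τ x) := by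
  refine ⟨τ x, fun r hr => ?_⟩
  obtain ⟨a, _, _, hax, rfl⟩ := hr
  exact state_mono hadd hτ hax

include hadd hτ in
theorem fI_le {x : G} (hx : 0 ≤ x) : fI I τ x ≤ τ x := by
  refine csSup_le (Sset_nonempty hx) fun r hr => ?_
  obtain ⟨a, _, _, hax, rfl⟩ := hr
  exact state_mono hadd hτ hax

include hadd hτ in
theorem le_fI {a : G} (haI : a ∈ I) (ha : 0 ≤ a) {x : G} (hax : a ≤ x) :
    τ a ≤ fI I τ x :=
  le_csSup (Sset_bdd hadd hτ) ⟨a, haI, ha, hax, rfl⟩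

include hadd hτ in
theorem fI_nonneg {x : G} (hx : 0 ≤ x) : 0 ≤ fI I τ x := by
  have := le_fI hadd hτ I.zero_mem (le_refl 0) hx
  rwa [state_zero hτ] at this

include hadd hτ in
theorem fI_add
    (hRiesz : ∀ a₁ a₂ b₁ b₂ : G, a₁ ≤ b₁ → a₁ ≤ b₂ → a₂ ≤ b₁ → a₂ ≤ b₂ →
      ∃ z : G, a₁ ≤ z ∧ a₂ ≤ z ∧ z ≤ b₁ ∧ z ≤ b₂)
    (hconv : ∀ g h x : G, g ∈ I → h ∈ I → g ≤ x → x ≤ h → x ∈ I)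
    {x y : G} (hx : 0 ≤ x) (hy : 0 ≤ y) :
    fI I τ (x + y) = fI I τ x + fI I τ y := by
  apply le_antisymm
  · refine csSup_le (Sset_nonempty (add_nonneg' hadd hx hy)) fun r hr => ?_
    obtain ⟨a, haI, ha0, hax, rfl⟩ := hr
    obtain ⟨a', b', ha'0, ha'x, hb'0, hb'y, hab⟩ :=
      riesz_decomp hadd hRiesz hx hy ha0 hax
    have ha'a : a' ≤ a := by
      rw [le_iff' hadd, hab, show a' + b' - a' = b' by abel]; exact hb'0
    have hb'a : b' ≤ a := by
      rw [le_iff' hadd, hab, show a' + b' - b' = a' by abel]; exact ha'0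
    have ha'I : a' ∈ I := hconv 0 a a' I.zero_mem haI ha'0 ha'a
    have hb'I : b' ∈ I := hconv 0 a b' I.zero_mem haI hb'0 hb'a
    rw [hab, state_add hτ]
    exact add_le_add (le_fI hadd hτ ha'I ha'0 ha'x) (le_fI hadd hτ hb'I hb'0 hb'y)
  · rw [← sub_nonneg, show fI I τ (x+y) - (fI I τ x + fI I τ y)
        = (fI I τ (x+y) - fI I τ y) - fI I τ x by ring, sub_nonneg]
    refine csSup_le (Sset_nonempty hx) fun r hr => ?_
    obtain ⟨a, haI, ha0, hax, rfl⟩ := hr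
    rw [le_sub_iff_add_le, add_comm, ← le_sub_iff_add_le]
    refine csSup_le (Sset_nonempty hy) fun s hs => ?_
    obtain ⟨b, hbI, hb0, hby, rfl⟩ := hs
    rw [le_sub_iff_add_le, add_comm]
    have : τ a + τ b = τ (a + b) := (state_add hτ a b).symm
    rw [this]
    exact le_fI hadd hτ (I.add_mem haI hbI) (add_nonneg' hadd ha0 hb0)
      (add_le_add'' hadd hax hby)

include hadd hτ in
theorem fI_nsmul
    (hRiesz : ∀ a₁ a₂ b₁ b₂ : G, a₁ ≤ b₁ → a₁ ≤ b₂ → a₂ ≤ b₁ → a₂ ≤ b₂ →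
      ∃ z : G, a₁ ≤ z ∧ a₂ ≤ z ∧ z ≤ b₁ ∧ z ≤ b₂)
    (hconv : ∀ g h x : G, g ∈ I → h ∈ I → g ≤ x → x ≤ h → x ∈ I)
    (hu0 : 0 ≤ u) {x : G} (hx : 0 ≤ x) :
    ∀ n : ℕ, fI I τ (x + n • u) = fI I τ x + n * fI I τ u
  | 0 => by simp
  | (n+1) => by
      rw [succ_nsmul, show x + (n • u + u) = (x + n • u) + u by abel,
        fI_add hadd hτ hRiesz hconv (add_nonneg' hadd hx (nsmul_nonneg' hadd hu0 n)) hu0,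
        fI_nsmul hRiesz hconv hu0 hx n]
      push_cast; ring

end fI

section Main

variable (hadd : ∀ g h x : G, g ≤ h → g + x ≤ h + x)
variable (hRiesz : ∀ a₁ a₂ b₁ b₂ : G, a₁ ≤ b₁ → a₁ ≤ b₂ → a₂ ≤ b₁ → a₂ ≤ b₂ →
      ∃ z : G, a₁ ≤ z ∧ a₂ ≤ z ∧ z ≤ b₁ ∧ z ≤ b₂)
variable {u : G} {I : AddSubgroup G}
variable (hconv : ∀ g h x : G, g ∈ I → h ∈ I → g ≤ x → x ≤ h → x ∈ I)
variable {τ : G → ℝ}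
include hadd hRiesz hconv

theorem exists_F (hτ : τ ∈ stateSet G u)
    (hu : 0 ≤ u ∧ ∀ g : G, ∃ n : ℕ, -(n • u) ≤ g ∧ g ≤ n • u) :
    ∃ F : G → ℝ, (∀ x : G, 0 ≤ x → F x = fI I τ x) ∧
      ∀ g h : G, F (g + h) = F g + F h := by
  choose n hn _ using hu.2
  have hn' : ∀ g : G, 0 ≤ g + n g • u := fun g => by
    have := (le_iff' hadd).mp (hn g)
    rwa [sub_neg_eq_add] at this
  set lam := fI I τ u with hlamdef
  have key : ∀ g : G, ∀ k : ℕ, 0 ≤ g + k • u →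
      fI I τ (g + k • u) - k * lam = fI I τ (g + n g • u) - (n g) * lam := by
    intro g k hk
    have e1 : fI I τ ((g + k • u) + n g • u) = fI I τ (g + k • u) + n g * lam :=
      fI_nsmul hadd hτ hRiesz hconv hu.1 hk (n g)
    have e2 : fI I τ ((g + n g • u) + k • u) = fI I τ (g + n g • u) + k * lam :=
      fI_nsmul hadd hτ hRiesz hconv hu.1 (hn' g) k
    rw [show (g + k • u) + n g • u = (g + n g • u) + k • u by abel] at e1
    linarith
  refine ⟨fun g => fI I τ (g + n g • u) - n g * lam, ?_, ?_⟩
  · intro x hx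
    have := key x 0 (by simpa using hx)
    simp only [zero_nsmul, add_zero, Nat.cast_zero, zero_mul, sub_zero] at this
    show fI I τ (x + n x • u) - ↑(n x) * lam = fI I τ x
    linarith
  · intro g h
    show fI I τ ((g + h) + n (g + h) • u) - ↑(n (g + h)) * lam
      = (fI I τ (g + n g • u) - ↑(n g) * lam) + (fI I τ (h + n h • u) - ↑(n h) * lam)
    have h1 : 0 ≤ (g + h) + (n g + n h) • u := by
      rw [add_nsmul, show g + h + (n g • u + n h • u) = (g + n g • u) + (h + n h • u) by abel]
      exact add_nonneg' hadd (hn' g) (hn' h)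
    have e := key (g + h) (n g + n h) h1
    have e4 : fI I τ ((g + h) + (n g + n h) • u)
        = fI I τ (g + n g • u) + fI I τ (h + n h • u) := by
      rw [add_nsmul, show (g + h) + (n g • u + n h • u) = (g + n g • u) + (h + n h • u) by abel]
      exact fI_add hadd hτ hRiesz hconv (hn' g) (hn' h)
    rw [e4] at e
    push_cast at e ⊢
    linarith

theorem dichotomy (hτe : τ ∈ Set.extremePoints ℝ (stateSet G u))
    (hu : 0 ≤ u ∧ ∀ g : G, ∃ n : ℕ, -(n • u) ≤ g ∧ g ≤ n • u) :
    fI I τ u ≤ 0 ∨ fI I τ u = 1 := by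
  have hτ := hτe.1
  set lam := fI I τ u with hlamdef
  by_contra hcon
  push_neg at hcon
  obtain ⟨hpos', hne1⟩ := hcon
  have hpos : 0 < lam := hpos'
  have hle1 : lam ≤ 1 := by
    have h := fI_le (I := I) hadd hτ hu.1
    rwa [hτ.2.2] at h
  have hlt1 : lam < 1 := lt_of_le_of_ne hle1 hne1
  obtain ⟨F, hF0, hFadd⟩ := exists_F hadd hRiesz hconv hτ hu
  have hFu : F u = lam := hF0 u hu.1
  have hFpos : ∀ x : G, 0 ≤ x → 0 ≤ F x := fun x hx => by
    rw [hF0 x hx]; exact fI_nonneg hadd hτ hx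
  have hFle : ∀ x : G, 0 ≤ x → F x ≤ τ x := fun x hx => by
    rw [hF0 x hx]; exact fI_le hadd hτ hx
  have hl0 : lam ≠ 0 := ne_of_gt hpos
  have h1l : (1:ℝ) - lam ≠ 0 := by linarith
  have hσS : (fun g => F g / lam) ∈ stateSet G u := by
    refine ⟨fun a b => ?_, fun a ha => div_nonneg (hFpos a ha) hpos.le, ?_⟩
    · show F (a + b) / lam = F a / lam + F b / lam
      rw [hFadd]; ring
    · show F u / lam = 1
      rw [hFu]; field_simp
  have hρS : (fun g => (τ g - F g) / (1 - lam)) ∈ stateSet G u := by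
    refine ⟨fun a b => ?_,
      fun a ha => div_nonneg (by linarith [hFle a ha]) (by linarith), ?_⟩
    · show (τ (a + b) - F (a + b)) / (1 - lam)
        = (τ a - F a) / (1 - lam) + (τ b - F b) / (1 - lam)
      rw [hτ.1, hFadd]; ring
    · show (τ u - F u) / (1 - lam) = 1
      rw [hτ.2.2, hFu]; field_simp
  have hseg : τ ∈ openSegment ℝ (fun g => F g / lam)
      (fun g => (τ g - F g) / (1 - lam)) := by
    refine ⟨lam, 1 - lam, hpos, by linarith, by ring, ?_⟩
    funext g
    show lam * (F g / lam) + (1 - lam) * ((τ g - F g) / (1 - lam)) = τ g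
    field_simp
    ring
  have hστ := hτe.2 hσS hρS hseg
  have hFτ : ∀ g : G, F g = lam * τ g := by
    intro g
    have h : F g / lam = τ g := congrFun hστ g
    rw [div_eq_iff hl0] at h
    linarith
  have hneg : ∀ a, a ∈ I → 0 ≤ a → a ≤ u → τ a ≤ 0 := by
    intro a haI ha0 hau
    have h1 : τ a ≤ fI I τ a := le_fI hadd hτ haI ha0 (le_refl a)
    have h4 : τ a ≤ lam * τ a := by rw [← hFτ a, hF0 a ha0]; exact h1
    by_contra hcc
    push_neg at hcc
    nlinarith [mul_lt_mul_of_pos_right hlt1 hcc]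
  have hfin : lam ≤ 0 := by
    refine csSup_le (Sset_nonempty hu.1) fun r hr => ?_
    obtain ⟨a, haI, ha0, hau, rfl⟩ := hr
    exact hneg a haI ha0 hau
  linarith

theorem tau_eq_fI (hτ : τ ∈ stateSet G u)
    (hu : 0 ≤ u ∧ ∀ g : G, ∃ n : ℕ, -(n • u) ≤ g ∧ g ≤ n • u)
    (hlam : fI I τ u = 1) {x : G} (hx : 0 ≤ x) : τ x = fI I τ x := by
  refine le_antisymm ?_ (fI_le hadd hτ hx)
  by_contra hcon
  push_neg at hcon
  set ε := τ x - fI I τ x with hεdef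
  have hεpos : 0 < ε := by simp only [hεdef]; linarith
  obtain ⟨n, -, hxn⟩ := hu.2 x
  have hn1 : (0:ℝ) < n + 1 := by positivity
  have hlt : 1 - ε / (n + 1) < sSup (Sset I τ u) := by
    rw [show sSup (Sset I τ u) = fI I τ u from rfl, hlam]
    have : 0 < ε / (n + 1) := div_pos hεpos hn1
    linarith
  obtain ⟨r, hrmem, hra⟩ := exists_lt_of_lt_csSup (Sset_nonempty hu.1) hlt
  obtain ⟨a, haI, ha0, hau, rfl⟩ := hrmem
  have hua : 0 ≤ u - a := (le_iff' hadd).mp hau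
  have c1 : x - n • (u - a) ≤ x := by
    rw [le_iff' hadd, show x - (x - n • (u - a)) = n • (u - a) by abel]
    exact nsmul_nonneg' hadd hua n
  have c2 : x - n • (u - a) ≤ n • a := by
    rw [le_iff' hadd, show n • a - (x - n • (u - a)) = (n • a + n • (u - a)) - x by abel,
      ← smul_add, show a + (u - a) = u by abel, ← le_iff' hadd]
    exact hxn
  obtain ⟨z, hz1, hz2, hz3, hz4⟩ :=
    hRiesz (x - n • (u - a)) 0 x (n • a) c1 c2 hx (nsmul_nonneg' hadd ha0 n)
  have hzI : z ∈ I := hconv 0 (n • a) z I.zero_mem (AddSubgroup.nsmul_mem I haI n) hz2 hz4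
  have h5 : τ z ≤ fI I τ x := le_fI hadd hτ hzI hz2 hz3
  have h6 : τ (x - n • (u - a)) ≤ τ z := state_mono hadd hτ hz1
  have h7 : τ (x - n • (u - a)) = τ x - n * (1 - τ a) := by
    rw [state_sub hτ, state_nsmul hτ, state_sub hτ, hτ.2.2]
  have h8 : (n:ℝ) * (1 - τ a) < ε := by
    have step1 : (n:ℝ) * (1 - τ a) ≤ n * (ε / (n + 1)) :=
      mul_le_mul_of_nonneg_left (by linarith) (Nat.cast_nonneg n)
    have step2 : (n:ℝ) * (ε / (n + 1)) < ε := by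
      rw [show (n:ℝ) * (ε / (n + 1)) = ε * (n / (n + 1)) by ring]
      have hlt1 : (n:ℝ) / (n + 1) < 1 := (div_lt_one hn1).mpr (by linarith)
      nlinarith [div_nonneg (Nat.cast_nonneg (α := ℝ) n) hn1.le]
    linarith
  simp only [hεdef] at h8
  linarith

theorem vanish (hτ : τ ∈ stateSet G u)
    (hu : 0 ≤ u ∧ ∀ g : G, ∃ n : ℕ, -(n • u) ≤ g ∧ g ≤ n • u)
    (hIdir : ∀ x ∈ I, ∃ a ∈ I, ∃ b ∈ I, 0 ≤ a ∧ 0 ≤ b ∧ x = a - b)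
    (h0 : ∀ a, a ∈ I → 0 ≤ a → a ≤ u → τ a ≤ 0) :
    ∀ x ∈ I, τ x = 0 := by
  have key : ∀ n : ℕ, ∀ a, a ∈ I → 0 ≤ a → a ≤ n • u → τ a ≤ 0 := by
    intro n
    induction n with
    | zero =>
        intro a _ h1 h2
        simp only [zero_nsmul] at h2
        have : a = 0 := le_antisymm h2 h1
        simp [this, state_zero hτ]
    | succ n ih =>
        intro a haI h1 h2
        rw [succ_nsmul] at h2
        obtain ⟨a', b', ha'0, ha'n, hb'0, hb'u, hab⟩ :=
          riesz_decomp hadd hRiesz (nsmul_nonneg' hadd hu.1 n) hu.1 h1 h2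
        have ha'a : a' ≤ a := by
          rw [le_iff' hadd, hab, show a' + b' - a' = b' by abel]; exact hb'0
        have hb'a : b' ≤ a := by
          rw [le_iff' hadd, hab, show a' + b' - b' = a' by abel]; exact ha'0
        have t1 := ih a' (hconv 0 a a' I.zero_mem haI ha'0 ha'a) ha'0 ha'n
        have t2 := h0 b' (hconv 0 a b' I.zero_mem haI hb'0 hb'a) hb'0 hb'u
        rw [hab, state_add hτ]
        linarith
  have pos0 : ∀ a, a ∈ I → 0 ≤ a → τ a = 0 := by
    intro a haI ha
    obtain ⟨n, -, h2⟩ := hu.2 a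
    exact le_antisymm (key n a haI ha h2) (hτ.2.1 a ha)
  intro x hx
  obtain ⟨a, haI, b, hbI, ha0, hb0, rfl⟩ := hIdir x hx
  rw [state_sub hτ, pos0 a haI ha0, pos0 b hbI hb0]
  ring

end Main

end Stmt8

/-- Distinct extreme states that are proportional on an ideal must both vanish
there: if `G` has Riesz interpolation with order unit `u`, `I` is an ideal,
`τ₁ ≠ τ₂` are extreme states on `(G, u)`, and `τ₂|_I` is a scalar multiple of
`τ₁|_I`, then `τ₂|_I = 0`. -/
theorem stmt8 {G : Type*} [AddCommGroup G] [PartialOrder G]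
    (hadd : ∀ g h x : G, g ≤ h → g + x ≤ h + x)
    (hdir : ∀ g h : G, ∃ y : G, g ≤ y ∧ h ≤ y)
    (hRiesz : ∀ a₁ a₂ b₁ b₂ : G, a₁ ≤ b₁ → a₁ ≤ b₂ → a₂ ≤ b₁ → a₂ ≤ b₂ →
      ∃ z : G, a₁ ≤ z ∧ a₂ ≤ z ∧ z ≤ b₁ ∧ z ≤ b₂)
    (u : G) (hu : 0 ≤ u ∧ ∀ g : G, ∃ n : ℕ, -(n • u) ≤ g ∧ g ≤ n • u)
    (I : AddSubgroup G)
    (hconv : ∀ g h x : G, g ∈ I → h ∈ I → g ≤ x → x ≤ h → x ∈ I)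
    (hIdir : ∀ x ∈ I, ∃ a ∈ I, ∃ b ∈ I, 0 ≤ a ∧ 0 ≤ b ∧ x = a - b)
    (τ₁ τ₂ : G → ℝ)
    (hτ₁ : τ₁ ∈ Set.extremePoints ℝ (stateSet G u))
    (hτ₂ : τ₂ ∈ Set.extremePoints ℝ (stateSet G u))
    (hne : τ₁ ≠ τ₂)
    (hprop : ∃ c : ℝ, ∀ x ∈ I, τ₂ x = c * τ₁ x) :
    ∀ x ∈ I, τ₂ x = 0 := by
  obtain ⟨c, hc⟩ := hprop
  have hτ1 : τ₁ ∈ stateSet G u := hτ₁.1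
  have hτ2 : τ₂ ∈ stateSet G u := hτ₂.1
  rcases Stmt8.dichotomy hadd hRiesz hconv hτ₂ hu with h2 | h2
  · -- τ₂ vanishes on I
    have h0 : ∀ a, a ∈ I → 0 ≤ a → a ≤ u → τ₂ a ≤ 0 := fun a haI ha0 hau =>
      le_trans (Stmt8.le_fI hadd hτ2 haI ha0 hau) h2
    exact Stmt8.vanish hadd hRiesz hconv hτ2 hu hIdir h0
  · exfalso
    -- lam₂ = 1; derive τ₁ = τ₂
    have hhalf : (1/2 : ℝ) < sSup (Stmt8.Sset I τ₂ u) := by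
      rw [show sSup (Stmt8.Sset I τ₂ u) = Stmt8.fI I τ₂ u from rfl, h2]
      norm_num
    obtain ⟨r, hrmem, hrgt⟩ :=
      exists_lt_of_lt_csSup (Stmt8.Sset_nonempty hu.1) hhalf
    obtain ⟨a₀, ha₀I, ha₀0, ha₀u, rfl⟩ := hrmem
    have hca : τ₂ a₀ = c * τ₁ a₀ := hc a₀ ha₀I
    have hτ1a0 : 0 ≤ τ₁ a₀ := hτ1.2.1 a₀ ha₀0
    have hcpos : 0 < c := by nlinarith
    have hτ1apos : 0 < τ₁ a₀ := by nlinarith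
    have h1 : Stmt8.fI I τ₁ u = 1 := by
      have hlam1pos : 0 < Stmt8.fI I τ₁ u :=
        lt_of_lt_of_le hτ1apos (Stmt8.le_fI hadd hτ1 ha₀I ha₀0 ha₀u)
      rcases Stmt8.dichotomy hadd hRiesz hconv hτ₁ hu with h | h
      · linarith
      · exact h
    have hc1 : c ≤ 1 := by
      have hle : Stmt8.fI I τ₁ u ≤ 1 / c := by
        refine csSup_le (Stmt8.Sset_nonempty hu.1) fun s hs => ?_
        obtain ⟨a, haI, h0a, hau, rfl⟩ := hs
        have hca' := hc a haI
        have h2' : τ₂ a ≤ Stmt8.fI I τ₂ u := Stmt8.le_fI hadd hτ2 haI h0a hau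
        rw [h2] at h2'
        rw [le_div_iff₀ hcpos]
        nlinarith
      rw [h1, le_div_iff₀ hcpos] at hle
      linarith
    have hc2 : 1 ≤ c := by
      have hle : Stmt8.fI I τ₂ u ≤ c := by
        refine csSup_le (Stmt8.Sset_nonempty hu.1) fun s hs => ?_
        obtain ⟨a, haI, h0a, hau, rfl⟩ := hs
        rw [hc a haI]
        have h1' : τ₁ a ≤ Stmt8.fI I τ₁ u := Stmt8.le_fI hadd hτ1 haI h0a hau
        rw [h1] at h1'
        nlinarith [hτ1.2.1 a h0a]
      rw [h2] at hle
      exact hle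
    have hceq : c = 1 := le_antisymm hc1 hc2
    have hIeq : ∀ x ∈ I, τ₁ x = τ₂ x := fun x hx => by
      rw [hc x hx, hceq, one_mul]
    have hfeq : ∀ x : G, Stmt8.fI I τ₁ x = Stmt8.fI I τ₂ x := by
      intro x
      unfold Stmt8.fI
      congr 1
      ext r
      constructor
      · rintro ⟨a, haI, h0a, hax, rfl⟩
        exact ⟨a, haI, h0a, hax, (hIeq a haI).symm⟩
      · rintro ⟨a, haI, h0a, hax, rfl⟩
        exact ⟨a, haI, h0a, hax, hIeq a haI⟩
    have hpos_eq : ∀ x : G, 0 ≤ x → τ₁ x = τ₂ x := fun x hx => by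
      rw [Stmt8.tau_eq_fI hadd hRiesz hconv hτ1 hu h1 hx,
        Stmt8.tau_eq_fI hadd hRiesz hconv hτ2 hu h2 hx, hfeq]
    apply hne
    funext g
    obtain ⟨n, hn1, -⟩ := hu.2 g
    have hgn : 0 ≤ g + n • u := by
      have := (Stmt8.le_iff' hadd).mp hn1
      rwa [sub_neg_eq_add] at this
    have e1 := hpos_eq (g + n • u) hgn
    have e2 : τ₁ (g + n • u) = τ₁ g + n * 1 := by
      rw [hτ1.1, Stmt8.state_nsmul hτ1, hτ1.2.2]
    have e3 : τ₂ (g + n • u) = τ₂ g + n * 1 := by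
      rw [hτ2.1, Stmt8.state_nsmul hτ2, hτ2.2.2]
    linarith
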